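/- arXiv:1603.04111 — 5 statements merged into one kernel-verified Lean document; each statement's English description precedes it below -/
import Mathlib

section
/- Define (a_n) by a_1 = a_2 = a_3 = 1 and for j ≥ 4, a_j ∈ {v_{j-1}, v_{j-1}+1} where v_{j-1} = (∏_{k=1}^{j-1}(a_k+1))^{j-3}. Then ξ = [0; a_1, a_2, a_3, ...] is an ultra-strong Liouville number, i.e., its convergents satisfy 0 < |ξ - p_n/q_n| < 1/q_n^n for all n ≥ 1. -/
open GenContFract

/-- Denominator recurrence as a natural-number sequence. -/
def Qd (a : ℕ → ℕ) : ℕ → ℕ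
  | 0 => 1
  | 1 => a 1
  | (n+2) => a (n+2) * Qd a (n+1) + Qd a n

lemma Qd_pos {a : ℕ → ℕ} (ha1 : a 1 = 1) : ∀ n, 1 ≤ Qd a n := by
  intro n
  induction n using Nat.strong_induction_on with
  | _ n ih =>
    match n with
    | 0 => simp [Qd]
    | 1 => simp [Qd, ha1]
    | (n+2) =>
      have := ih n (by omega)
      simp only [Qd]; omega

lemma a_pos {a : ℕ → ℕ} (ha1 : a 1 = 1) (ha2 : a 2 = 1) (ha3 : a 3 = 1)
    (ha : ∀ j, 4 ≤ j →
      a j = (∏ k ∈ Finset.Icc 1 (j - 1), (a k + 1)) ^ (j - 3) ∨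
      a j = (∏ k ∈ Finset.Icc 1 (j - 1), (a k + 1)) ^ (j - 3) + 1) :
    ∀ j, 1 ≤ j → 1 ≤ a j := by
  intro j hj
  rcases lt_or_ge j 4 with h | h
  · interval_cases j <;> omega
  · have hp : 1 ≤ (∏ k ∈ Finset.Icc 1 (j - 1), (a k + 1)) ^ (j - 3) := by
      exact Nat.one_le_pow _ _ (Finset.prod_pos fun k _ => Nat.succ_pos _)
    rcases ha j h with h' | h' <;> omega

lemma Qd_mono {a : ℕ → ℕ} (ha1 : a 1 = 1) (apos : ∀ j, 1 ≤ j → 1 ≤ a j) :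
    ∀ n, Qd a n ≤ Qd a (n+1) := by
  intro n
  match n with
  | 0 => simp [Qd, ha1]
  | (n+1) =>
    have h := apos (n+2) (by omega)
    have h2 : Qd a (n+1) ≤ a (n+2) * Qd a (n+1) := Nat.le_mul_of_pos_left _ (by omega)
    simp only [Qd]; omega

lemma Qd_le_prod {a : ℕ → ℕ} (ha1 : a 1 = 1) (apos : ∀ j, 1 ≤ j → 1 ≤ a j) :
    ∀ n, Qd a n ≤ ∏ k ∈ Finset.Icc 1 n, (a k + 1) := by
  intro n
  induction n using Nat.strong_induction_on with
  | _ n ih =>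
    match n with
    | 0 => simp [Qd]
    | 1 => simp [Qd]
    | (n+2) =>
      have hrec : ∏ k ∈ Finset.Icc 1 (n+2), (a k + 1)
          = (∏ k ∈ Finset.Icc 1 (n+1), (a k + 1)) * (a (n+2) + 1) := by
        rw [← Finset.prod_Icc_succ_top (by omega : 1 ≤ n+2)]
      have h1 : Qd a (n+1) ≤ ∏ k ∈ Finset.Icc 1 (n+1), (a k + 1) := ih (n+1) (by omega)
      have h2 : Qd a n ≤ Qd a (n+1) := Qd_mono ha1 apos n
      have : Qd a (n+2) ≤ Qd a (n+1) * (a (n+2) + 1) := by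
        simp only [Qd]; nlinarith [h2]
      calc Qd a (n+2) ≤ Qd a (n+1) * (a (n+2) + 1) := this
        _ ≤ (∏ k ∈ Finset.Icc 1 (n+1), (a k + 1)) * (a (n+2) + 1) :=
            Nat.mul_le_mul_right _ h1
        _ = _ := hrec.symm

lemma Qd_key {a : ℕ → ℕ} (ha1 : a 1 = 1) (ha2 : a 2 = 1) (ha3 : a 3 = 1)
    (ha : ∀ j, 4 ≤ j →
      a j = (∏ k ∈ Finset.Icc 1 (j - 1), (a k + 1)) ^ (j - 3) ∨
      a j = (∏ k ∈ Finset.Icc 1 (j - 1), (a k + 1)) ^ (j - 3) + 1) :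
    ∀ n, 1 ≤ n → Qd a n ^ (n - 1) < Qd a (n + 1) := by
  have apos := a_pos ha1 ha2 ha3 ha
  intro n hn
  match n, hn with
  | 1, _ => simp [Qd, ha1, ha2]
  | 2, _ => simp [Qd, ha1, ha2, ha3]
  | (m+3), _ =>
    have hP : Qd a (m+3) ≤ ∏ k ∈ Finset.Icc 1 (m+3), (a k + 1) := Qd_le_prod ha1 apos _
    have haj : (∏ k ∈ Finset.Icc 1 (m+3), (a k + 1)) ^ (m+1) ≤ a (m+4) := by
      have h4 : (4 : ℕ) ≤ m + 4 := by omega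
      have e1 : m + 4 - 1 = m + 3 := by omega
      have e2 : m + 4 - 3 = m + 1 := by omega
      rcases ha (m+4) h4 with h' | h' <;>
        simp only [h', e1, e2, le_refl, Nat.le_succ]
    have hQpos := Qd_pos ha1
    have e3 : m + 3 - 1 = m + 2 := by omega
    rw [e3]
    calc Qd a (m+3) ^ (m+2) = Qd a (m+3) ^ (m+1) * Qd a (m+3) := by ring
      _ ≤ (∏ k ∈ Finset.Icc 1 (m+3), (a k + 1)) ^ (m+1) * Qd a (m+3) :=
          Nat.mul_le_mul_right _ (Nat.pow_le_pow_left hP _)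
      _ ≤ a (m+4) * Qd a (m+3) := Nat.mul_le_mul_right _ haj
      _ < a (m+4) * Qd a (m+3) + Qd a (m+2) := by have := hQpos (m+2); omega
      _ = Qd a (m+4) := rfl

lemma dens_eq_Qd {a : ℕ → ℕ} {ξ : ℝ}
    (hξa : ∀ n : ℕ, (GenContFract.of ξ).partDens.get? n = some (a (n + 1))) :
    ∀ n, (GenContFract.of ξ).dens n = (Qd a n : ℝ) := by
  have hs : ∀ n, ∃ gp : GenContFract.Pair ℝ,
      (GenContFract.of ξ).s.get? n = some gp ∧ gp.a = 1 ∧ gp.b = (a (n+1) : ℝ) := by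
    intro n
    obtain ⟨gp, hgp, hb⟩ := exists_s_b_of_partDen (hξa n)
    exact ⟨gp, hgp, of_partNum_eq_one (partNum_eq_s_a hgp), hb⟩
  intro n
  induction n using Nat.strong_induction_on with
  | _ n ih =>
    match n with
    | 0 => simp [zeroth_den_eq_one, Qd]
    | 1 =>
      obtain ⟨gp, hgp, _, hb⟩ := hs 0
      rw [first_den_eq hgp, hb]; simp [Qd]
    | (n+2) =>
      obtain ⟨gp, hgp, hA, hb⟩ := hs (n+1)
      rw [dens_recurrence hgp (ih n (by omega)) (ih (n+1) (by omega)), hA, hb]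
      push_cast [Qd]
      ring

/-- For the sequence `a_1 = a_2 = a_3 = 1`, `a_j ∈ {v_{j-1}, v_{j-1}+1}` for `j ≥ 4` with
`v_{j-1} = (∏_{k=1}^{j-1} (a_k+1))^{j-3}`, the number `ξ = [0; a_1, a_2, a_3, …]` is an
ultra-strong Liouville number: its convergents satisfy `0 < |ξ - p_n/q_n| < 1/q_n^n`
for all `n ≥ 1`. -/
theorem stmt_4 (a : ℕ → ℕ)
    (ha1 : a 1 = 1) (ha2 : a 2 = 1) (ha3 : a 3 = 1)
    (ha : ∀ j, 4 ≤ j →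
      a j = (∏ k ∈ Finset.Icc 1 (j - 1), (a k + 1)) ^ (j - 3) ∨
      a j = (∏ k ∈ Finset.Icc 1 (j - 1), (a k + 1)) ^ (j - 3) + 1)
    (ξ : ℝ) (hξ0 : (GenContFract.of ξ).h = 0)
    (hξa : ∀ n : ℕ, (GenContFract.of ξ).partDens.get? n = some (a (n + 1))) :
    ∀ n : ℕ, 1 ≤ n →
      0 < |ξ - (GenContFract.of ξ).convs n| ∧
      |ξ - (GenContFract.of ξ).convs n| < 1 / ((GenContFract.of ξ).dens n) ^ n := by
  have hnt : ∀ m, ¬(GenContFract.of ξ).TerminatedAt m := by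
    intro m
    simp [terminatedAt_iff_partDen_none, hξa m]
  have hirr : Irrational ξ := by
    rintro ⟨q, rfl⟩
    obtain ⟨m, hm⟩ := (terminates_iff_rat (q : ℝ)).2 ⟨q, rfl⟩
    exact hnt m hm
  have hdens := dens_eq_Qd hξa
  have hQpos := Qd_pos ha1
  intro n hn
  constructor
  · rw [abs_pos, sub_ne_zero, Real.convs_eq_convergent]
    exact hirr.ne_rat _
  · have h1 := abs_sub_convs_le (v := ξ) (hnt n)
    have hkey : Qd a n ^ n < Qd a n * Qd a (n + 1) := by
      obtain ⟨m, rfl⟩ : ∃ m, n = m + 1 := ⟨n - 1, by omega⟩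
      calc Qd a (m+1) ^ (m+1) = Qd a (m+1) * Qd a (m+1) ^ m := by ring
        _ < Qd a (m+1) * Qd a (m+2) := by
            have h2 := Qd_key ha1 ha2 ha3 ha (m+1) (by omega)
            simp only [Nat.add_sub_cancel] at h2
            exact Nat.mul_lt_mul_of_le_of_lt (le_refl _) h2 (hQpos _)
    refine lt_of_le_of_lt h1 ?_
    rw [hdens n, hdens (n+1)]
    apply one_div_lt_one_div_of_lt
    · have : (1:ℝ) ≤ (Qd a n : ℝ) := by exact_mod_cast hQpos n
      positivity
    · exact_mod_cast hkey
end

section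
/- The set of ultra-strong Liouville numbers is uncountable. -/
/-- A real `ξ` is an ultra-strong Liouville number if the convergents of its continued
fraction satisfy `0 < |ξ - p_n/q_n| < 1/q_n^n` for all `n ≥ 1`. -/
def UltraStrongLiouville (ξ : ℝ) : Prop :=
  ∀ n : ℕ, 1 ≤ n →
    0 < |ξ - (GenContFract.of ξ).convs n| ∧
    |ξ - (GenContFract.of ξ).convs n| < 1 / ((GenContFract.of ξ).dens n) ^ n

namespace USL
open GenContFract Filter Int
open GenContFract (of)

/-- value of the finite continued fraction `[b 0; b 1, ..., b n]`. -/
noncomputable def cfv : ℕ → (ℕ → ℕ) → ℝ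
  | 0, b => b 0
  | n+1, b => b 0 + (cfv n (fun i => b (i+1)))⁻¹

lemma cfv_bounds : ∀ (n : ℕ) (b : ℕ → ℕ), (∀ i, 2 ≤ b i) →
    (b 0 : ℝ) ≤ cfv n b ∧ cfv n b ≤ (b 0 : ℝ) + 2⁻¹ := by
  intro n
  induction n with
  | zero =>
    intro b hb
    refine ⟨le_of_eq rfl, ?_⟩
    show (b 0 : ℝ) ≤ (b 0 : ℝ) + 2⁻¹
    norm_num
  | succ n ih =>
    intro b hb
    have ht := ih (fun i => b (i+1)) (fun i => hb (i+1))
    have h2 : (2 : ℝ) ≤ cfv n (fun i => b (i+1)) := by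
      refine le_trans ?_ ht.1
      exact_mod_cast hb 1
    have hpos : (0 : ℝ) < cfv n (fun i => b (i+1)) := lt_of_lt_of_le two_pos h2
    constructor
    · simp only [cfv]
      nlinarith [inv_nonneg.mpr hpos.le]
    · simp only [cfv]
      have : (cfv n (fun i => b (i+1)))⁻¹ ≤ 2⁻¹ := by
        apply inv_anti₀ two_pos h2
      linarith

lemma two_le_cfv (n : ℕ) (b : ℕ → ℕ) (hb : ∀ i, 2 ≤ b i) : (2 : ℝ) ≤ cfv n b := by
  refine le_trans ?_ (cfv_bounds n b hb).1
  exact_mod_cast hb 0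

lemma cfv_diff : ∀ (n : ℕ) (b : ℕ → ℕ), (∀ i, 2 ≤ b i) →
    |cfv (n+1) b - cfv n b| ≤ (2⁻¹ : ℝ) ^ (n+1) := by
  intro n
  induction n with
  | zero =>
    intro b hb
    have h2 : (2:ℝ) ≤ (b 1 : ℝ) := by exact_mod_cast hb 1
    simp only [cfv]
    rw [show ((b 0 : ℝ) + ((b 1 : ℝ))⁻¹ - (b 0 : ℝ)) = ((b 1 : ℝ))⁻¹ by ring]
    rw [abs_of_nonneg (by positivity)]
    rw [pow_one]
    exact inv_anti₀ two_pos h2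
  | succ n ih =>
    intro b hb
    set t := fun i => b (i+1) with ht
    have hbt : ∀ i, 2 ≤ t i := fun i => hb (i+1)
    have hx := two_le_cfv (n+1) t hbt
    have hy := two_le_cfv n t hbt
    have hxp : (0:ℝ) < cfv (n+1) t := lt_of_lt_of_le two_pos hx
    have hyp : (0:ℝ) < cfv n t := lt_of_lt_of_le two_pos hy
    have key : cfv (n+2) b - cfv (n+1) b
        = (cfv n t - cfv (n+1) t) / (cfv (n+1) t * cfv n t) := by
      have e1 : cfv (n+2) b = (b 0 : ℝ) + (cfv (n+1) t)⁻¹ := rfl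
      have e2 : cfv (n+1) b = (b 0 : ℝ) + (cfv n t)⁻¹ := rfl
      rw [e1, e2]
      field_simp
      ring
    rw [key, abs_div]
    have h4 : (4:ℝ) ≤ cfv (n+1) t * cfv n t := by nlinarith
    have habs : |cfv (n+1) t * cfv n t| = cfv (n+1) t * cfv n t := abs_of_pos (by positivity)
    rw [habs, abs_sub_comm]
    have hih := ih t hbt
    calc |cfv (n+1) t - cfv n t| / (cfv (n+1) t * cfv n t)
        ≤ (2⁻¹:ℝ)^(n+1) / 2 := by
          apply div_le_div₀ (by positivity) hih (by norm_num) (by linarith)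
      _ = (2⁻¹:ℝ)^(n+2) := by ring

lemma cauchy_cfv (b : ℕ → ℕ) (hb : ∀ i, 2 ≤ b i) : CauchySeq (fun n => cfv n b) := by
  apply cauchySeq_of_le_geometric (2⁻¹:ℝ) 2⁻¹ (by norm_num)
  intro n
  rw [Real.dist_eq, abs_sub_comm]
  calc |cfv (n+1) b - cfv n b| ≤ (2⁻¹:ℝ)^(n+1) := cfv_diff n b hb
    _ = 2⁻¹ * (2⁻¹:ℝ)^n := by ring

noncomputable def cflim (b : ℕ → ℕ) : ℝ := limUnder atTop (fun n => cfv n b)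

lemma tendsto_cflim (b : ℕ → ℕ) (hb : ∀ i, 2 ≤ b i) :
    Tendsto (fun n => cfv n b) atTop (nhds (cflim b)) :=
  (cauchy_cfv b hb).tendsto_limUnder

lemma cflim_bounds (b : ℕ → ℕ) (hb : ∀ i, 2 ≤ b i) :
    (b 0 : ℝ) ≤ cflim b ∧ cflim b ≤ (b 0 : ℝ) + 2⁻¹ := by
  constructor
  · exact ge_of_tendsto' (tendsto_cflim b hb) (fun n => (cfv_bounds n b hb).1)
  · exact le_of_tendsto' (tendsto_cflim b hb) (fun n => (cfv_bounds n b hb).2)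

lemma two_le_cflim (b : ℕ → ℕ) (hb : ∀ i, 2 ≤ b i) : (2 : ℝ) ≤ cflim b :=
  le_trans (by exact_mod_cast hb 0) (cflim_bounds b hb).1

lemma cflim_pos (b : ℕ → ℕ) (hb : ∀ i, 2 ≤ b i) : (0 : ℝ) < cflim b :=
  lt_of_lt_of_le two_pos (two_le_cflim b hb)

lemma cflim_eq (b : ℕ → ℕ) (hb : ∀ i, 2 ≤ b i) :
    cflim b = (b 0 : ℝ) + (cflim (fun i => b (i+1)))⁻¹ := by
  set t := fun i => b (i+1) with htdef
  have hbt : ∀ i, 2 ≤ t i := fun i => hb (i+1)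
  have h1 : Tendsto (fun n => cfv (n+1) b) atTop (nhds (cflim b)) :=
    (tendsto_cflim b hb).comp (tendsto_add_atTop_nat 1)
  have h2 : Tendsto (fun n => cfv (n+1) b) atTop (nhds ((b 0 : ℝ) + (cflim t)⁻¹)) := by
    have : (fun n => cfv (n+1) b) = fun n => (b 0 : ℝ) + (cfv n t)⁻¹ := rfl
    rw [this]
    exact Tendsto.const_add _ ((tendsto_cflim t hbt).inv₀ (cflim_pos t hbt).ne')
  exact tendsto_nhds_unique h1 h2

lemma floor_cflim (b : ℕ → ℕ) (hb : ∀ i, 2 ≤ b i) : ⌊cflim b⌋ = (b 0 : ℤ) := by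
  obtain ⟨h1, h2⟩ := cflim_bounds b hb
  rw [Int.floor_eq_iff]
  constructor
  · exact_mod_cast h1
  · push_cast; linarith

lemma fract_cflim (b : ℕ → ℕ) (hb : ∀ i, 2 ≤ b i) :
    Int.fract (cflim b) = (cflim (fun i => b (i+1)))⁻¹ := by
  rw [Int.fract, floor_cflim b hb, cflim_eq b hb]
  push_cast; ring

lemma fract_cflim_ne (b : ℕ → ℕ) (hb : ∀ i, 2 ≤ b i) : Int.fract (cflim b) ≠ 0 := by
  rw [fract_cflim b hb]
  exact inv_ne_zero (cflim_pos _ (fun i => hb (i+1))).ne'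

lemma inv_fract_cflim (b : ℕ → ℕ) (hb : ∀ i, 2 ≤ b i) :
    (Int.fract (cflim b))⁻¹ = cflim (fun i => b (i+1)) := by
  rw [fract_cflim b hb, inv_inv]

lemma of_s_cflim : ∀ (n : ℕ) (b : ℕ → ℕ), (∀ i, 2 ≤ b i) →
    (of (cflim b)).s.get? n = some ⟨1, (b (n+1) : ℝ)⟩ := by
  intro n
  induction n with
  | zero =>
    intro b hb
    have h := of_s_head (fract_cflim_ne b hb)
    have : (of (cflim b)).s.get? 0 = (of (cflim b)).s.head := rfl
    rw [this, h, inv_fract_cflim b hb, floor_cflim _ (fun i => hb (i+1))]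
    norm_cast
  | succ n ih =>
    intro b hb
    rw [of_s_succ, inv_fract_cflim b hb]
    exact ih (fun i => b (i+1)) (fun i => hb (i+1))

lemma not_terminatedAt_cflim (b : ℕ → ℕ) (hb : ∀ i, 2 ≤ b i) (n : ℕ) :
    ¬(of (cflim b)).TerminatedAt n := by
  simp [GenContFract.TerminatedAt, Stream'.Seq.TerminatedAt, of_s_cflim n b hb]

lemma cflim_ne_conv (b : ℕ → ℕ) (hb : ∀ i, 2 ≤ b i) (n : ℕ) :
    cflim b ≠ (of (cflim b)).convs n := by
  intro h
  obtain ⟨q, hq⟩ := exists_rat_eq_nth_conv (v := cflim b) (n := n)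
  have hterm : (of (cflim b)).Terminates :=
    (terminates_iff_rat (cflim b)).mpr ⟨q, by rw [h, hq]⟩
  obtain ⟨m, hm⟩ := hterm
  exact not_terminatedAt_cflim b hb m hm

section Dens
variable (b : ℕ → ℕ) (hb : ∀ i, 2 ≤ b i)

lemma one_le_dens (n : ℕ) : (1 : ℝ) ≤ (of (cflim b)).dens n := by
  induction n with
  | zero => rw [zeroth_den_eq_one]
  | succ n ih => exact ih.trans of_den_mono

include hb in
lemma dens_succ_ge (n : ℕ) :
    (b (n+1) : ℝ) * (of (cflim b)).dens n ≤ (of (cflim b)).dens (n+1) :=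
  le_of_succ_get?_den (partDen_eq_s_b (of_s_cflim n b hb))

include hb in
lemma dens_rec (n : ℕ) :
    (of (cflim b)).dens (n+2)
      = (b (n+2) : ℝ) * (of (cflim b)).dens (n+1) + (of (cflim b)).dens n := by
  have := dens_recurrence (of_s_cflim (n+1) b hb) (rfl : (of (cflim b)).dens n = _)
    (rfl : (of (cflim b)).dens (n+1) = _)
  simpa using this

include hb in
lemma dens_one : (of (cflim b)).dens 1 = (b 1 : ℝ) :=
  first_den_eq (of_s_cflim 0 b hb)

end Dens

/-- state: `(bs s n).1 = b n`, `(bs s n).2 = ∏_{i ≤ n} (b i + 1)`. -/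
def bs (s : ℕ → Bool) : ℕ → ℕ × ℕ
  | 0 => (2, 3)
  | n+1 =>
    ((bs s n).2 ^ (n+1) * 2 + (if s n then 1 else 0),
     (bs s n).2 * ((bs s n).2 ^ (n+1) * 2 + (if s n then 1 else 0) + 1))

def bf (s : ℕ → Bool) (n : ℕ) : ℕ := (bs s n).1
def Pf (s : ℕ → Bool) (n : ℕ) : ℕ := (bs s n).2

lemma Pf_pos (s : ℕ → Bool) (n : ℕ) : 1 ≤ Pf s n := by
  induction n with
  | zero => norm_num [Pf, bs]
  | succ n ih => simp only [Pf, bs]; exact Nat.mul_pos ih (Nat.le_add_left 1 _)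

lemma bf_good (s : ℕ → Bool) : ∀ n, 2 ≤ bf s n := by
  intro n
  cases n with
  | zero => norm_num [bf, bs]
  | succ n =>
    have := Pf_pos s n
    simp only [bf, bs]
    have : 1 ≤ (bs s n).2 ^ (n+1) := Nat.one_le_pow _ _ (Pf_pos s n)
    omega

lemma Pf_succ (s : ℕ → Bool) (n : ℕ) : Pf s (n+1) = Pf s n * (bf s (n+1) + 1) := rfl

lemma bf_succ_ge (s : ℕ → Bool) (n : ℕ) : Pf s n ^ (n+1) * 2 ≤ bf s (n+1) := by
  simp [bf, bs, Pf]

lemma Pf_mono (s : ℕ → Bool) (n : ℕ) : Pf s n ≤ Pf s (n+1) := by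
  rw [Pf_succ]; nlinarith [Pf_pos s n, bf_good s (n+1)]

lemma dens_le_Pf (s : ℕ → Bool) (hb : ∀ i, 2 ≤ bf s i) (n : ℕ) :
    ((of (cflim (bf s))).dens n : ℝ) ≤ (Pf s n : ℝ) := by
  have key : ∀ m : ℕ, ((of (cflim (bf s))).dens m ≤ (Pf s m : ℝ)) ∧
      ((of (cflim (bf s))).dens (m+1) ≤ (Pf s (m+1) : ℝ)) := by
    intro m
    induction m with
    | zero =>
      constructor
      · rw [zeroth_den_eq_one]; norm_num [Pf, bs]
      · rw [dens_one (bf s) hb, Pf_succ]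
        have h1 : (1:ℕ) ≤ Pf s 0 := Pf_pos s 0
        push_cast
        have hP : (1:ℝ) ≤ (Pf s 0 : ℝ) := by exact_mod_cast h1
        have hbf : (0:ℝ) ≤ (bf s 1 : ℝ) + 1 := by positivity
        nlinarith [mul_le_mul_of_nonneg_right hP hbf]
    | succ m ih =>
      refine ⟨ih.2, ?_⟩
      rw [dens_rec (bf s) hb m, Pf_succ]
      have hmono : (of (cflim (bf s))).dens m ≤ (of (cflim (bf s))).dens (m+1) := of_den_mono
      have h2 := ih.2
      have h1 : (1:ℝ) ≤ (of (cflim (bf s))).dens (m+1) := one_le_dens (bf s) (m+1)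
      push_cast
      nlinarith [ih.1]
  exact (key n).1

lemma dens_growth (s : ℕ → Bool) (hb : ∀ i, 2 ≤ bf s i) (n : ℕ) (hn : 1 ≤ n) :
    ((of (cflim (bf s))).dens n) ^ n
      < (of (cflim (bf s))).dens n * (of (cflim (bf s))).dens (n+1) := by
  set B : ℕ → ℝ := fun k => (of (cflim (bf s))).dens k with hB
  have h1 : (1:ℝ) ≤ B n := one_le_dens (bf s) n
  have hBnn : (0:ℝ) ≤ B n := by linarith
  have hle : B n ≤ (Pf s n : ℝ) := dens_le_Pf s hb n
  have hb1 : ((Pf s n : ℝ)) ^ (n+1) * 2 ≤ (bf s (n+1) : ℝ) := by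
    exact_mod_cast bf_succ_ge s n
  have hpow : B n ^ (n+1) ≤ ((Pf s n : ℝ)) ^ (n+1) := pow_le_pow_left₀ hBnn hle _
  have h2 : (bf s (n+1) : ℝ) * B n ≤ B (n+1) := dens_succ_ge (bf s) hb n
  have h3 : (bf s (n+1) : ℝ) ≤ (bf s (n+1) : ℝ) * B n := le_mul_of_one_le_right (by positivity) h1
  have h5 : B n ^ n ≤ B n ^ (n+1) := pow_le_pow_right₀ h1 (by omega)
  have h6 : (0:ℝ) < B n ^ n := by positivity
  have : B n ^ n < B (n+1) := by nlinarith
  calc B n ^ n < B (n+1) := this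
    _ ≤ B n * B (n+1) := le_mul_of_one_le_left (by nlinarith) h1

theorem usl_cflim (s : ℕ → Bool) : UltraStrongLiouville (cflim (bf s)) := by
  have hb := bf_good s
  intro n hn
  constructor
  · rw [abs_pos, sub_ne_zero]
    exact cflim_ne_conv (bf s) hb n
  · have h1 := abs_sub_convs_le (not_terminatedAt_cflim (bf s) hb n)
    refine lt_of_le_of_lt h1 ?_
    apply one_div_lt_one_div_of_lt
    · have := one_le_dens (bf s) n
      positivity
    · exact dens_growth s hb n hn

theorem usl_inj : Function.Injective (fun s : ℕ → Bool => cflim (bf s)) := by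
  intro s s' h
  simp only at h
  have hbf : ∀ n, bf s (n+1) = bf s' (n+1) := by
    intro n
    have h1 := of_s_cflim n (bf s) (bf_good s)
    have h2 := of_s_cflim n (bf s') (bf_good s')
    rw [h] at h1
    rw [h1] at h2
    have := (Option.some_injective _ h2)
    have hreal : ((bf s (n+1) : ℕ) : ℝ) = ((bf s' (n+1) : ℕ) : ℝ) :=
      congrArg GenContFract.Pair.b this
    exact_mod_cast hreal
  have hbs : ∀ n, bs s n = bs s' n := by
    intro n
    induction n with
    | zero => rfl
    | succ n ih =>
      have hP : (bs s n).2 = (bs s' n).2 := by rw [ih]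
      have hX : bf s (n+1) = bf s' (n+1) := hbf n
      simp only [bf, bs] at hX ⊢
      rw [hP] at hX
      have hif : (if s n then 1 else 0) = (if s' n then 1 else 0) := by omega
      rw [hP, hif]
  funext n
  have hX := hbf n
  have hP : (bs s n).2 = (bs s' n).2 := by rw [hbs n]
  simp only [bf, bs, hP] at hX
  cases hs : s n <;> cases hs' : s' n <;> rw [hs, hs'] at hX <;> simp at hX <;> omega

theorem not_countable_funBool : ¬ Countable (ℕ → Bool) := by
  intro h
  obtain ⟨g, hg⟩ := exists_injective_nat (ℕ → Bool)
  classical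
  refine Function.cantor_injective (fun x : Set ℕ => g fun n => decide (n ∈ x)) ?_
  refine hg.comp fun x y hxy => Set.ext fun n => ?_
  have := congrFun hxy n
  simpa using this

end USL

/-- The set of ultra-strong Liouville numbers is uncountable. -/
theorem stmt_5 : ¬ ({ξ : ℝ | UltraStrongLiouville ξ}).Countable := by
  intro hc
  have hpre := hc.preimage USL.usl_inj
  have huniv : (Set.univ : Set (ℕ → Bool)).Countable := by
    refine Set.Countable.mono (fun s _ => ?_) hpre
    exact USL.usl_cflim s
  exact USL.not_countable_funBool (Set.countable_univ_iff.mp huniv)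
end

section
/- If ξ is a Liouville number and p_n/q_n are the convergents of its continued fraction expansion with q_n the denominators, then q_m > e^{(m-3)!} for all sufficiently large m, provided ξ is an ultra-strong Liouville number. -/
/-- If `ξ` is an ultra-strong Liouville number (in particular a Liouville number), then the
denominators `q_m` of its continued fraction convergents satisfy `q_m > e^{(m-3)!}` for all
sufficiently large `m`. -/
theorem stmt_6 (ξ : ℝ) (hL : Liouville ξ) (h : UltraStrongLiouville ξ) :
    ∃ N : ℕ, ∀ m : ℕ, N ≤ m →
      Real.exp (Nat.factorial (m - 3)) < (GenContFract.of ξ).dens m := by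
  have hnt : ∀ n, ¬(GenContFract.of ξ).TerminatedAt n := by
    intro n hterm
    obtain ⟨q, hq⟩ := (GenContFract.terminates_iff_rat ξ).mp ⟨n, hterm⟩
    exact hL.irrational ⟨q, hq.symm⟩
  have hfib : ∀ n, (Nat.fib (n + 1) : ℝ) ≤ (GenContFract.of ξ).dens n := fun n =>
    GenContFract.succ_nth_fib_le_of_nth_den (Or.inr (hnt _))
  have hQ1 : ∀ n, (1 : ℝ) ≤ (GenContFract.of ξ).dens n := by
    intro n
    refine le_trans ?_ (hfib n)
    exact_mod_cast Nat.one_le_iff_ne_zero.mpr (Nat.fib_pos.mpr (Nat.succ_pos n)).ne'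
  have hQpos : ∀ n, (0 : ℝ) < (GenContFract.of ξ).dens n := fun n =>
    lt_of_lt_of_le one_pos (hQ1 n)
  have hmono : Monotone fun n => (GenContFract.of ξ).dens n :=
    monotone_nat_of_le_succ fun n => GenContFract.of_den_mono
  have hdet : ∀ n, (GenContFract.of ξ).nums n * (GenContFract.of ξ).dens (n + 1) -
      (GenContFract.of ξ).dens n * (GenContFract.of ξ).nums (n + 1) = (-1) ^ (n + 1) :=
    fun n => SimpContFract.determinant (s := SimpContFract.of ξ) (hnt n)
  -- distance between consecutive convergents
  have hdiff : ∀ n, |(GenContFract.of ξ).convs n - (GenContFract.of ξ).convs (n + 1)| =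
      1 / ((GenContFract.of ξ).dens n * (GenContFract.of ξ).dens (n + 1)) := by
    intro n
    have e : (GenContFract.of ξ).convs n - (GenContFract.of ξ).convs (n + 1) =
        ((-1 : ℝ)) ^ (n + 1) / ((GenContFract.of ξ).dens n * (GenContFract.of ξ).dens (n + 1)) := by
      rw [GenContFract.conv_eq_num_div_den, GenContFract.conv_eq_num_div_den]
      rw [div_sub_div _ _ (hQpos n).ne' (hQpos (n + 1)).ne']
      rw [hdet n]
    rw [e, abs_div, abs_pow, abs_neg, abs_one, one_pow,
      abs_of_pos (mul_pos (hQpos n) (hQpos (n + 1)))]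
  -- key inequality : qₙ^n < 2 qₙ qₙ₊₁
  have hA : ∀ n, 1 ≤ n → (GenContFract.of ξ).dens n ^ n <
      2 * ((GenContFract.of ξ).dens n * (GenContFract.of ξ).dens (n + 1)) := by
    intro n hn
    have t1 := (h n hn).2
    have t2 := (h (n + 1) (by omega)).2
    have tri : 1 / ((GenContFract.of ξ).dens n * (GenContFract.of ξ).dens (n + 1)) ≤
        |ξ - (GenContFract.of ξ).convs n| + |ξ - (GenContFract.of ξ).convs (n + 1)| := by
      rw [← hdiff n]
      calc |(GenContFract.of ξ).convs n - (GenContFract.of ξ).convs (n + 1)|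
          ≤ |(GenContFract.of ξ).convs n - ξ| + |ξ - (GenContFract.of ξ).convs (n + 1)| :=
            abs_sub_le _ _ _
        _ = |ξ - (GenContFract.of ξ).convs n| + |ξ - (GenContFract.of ξ).convs (n + 1)| := by
            rw [abs_sub_comm]
    have hpow : (GenContFract.of ξ).dens n ^ n ≤ (GenContFract.of ξ).dens (n + 1) ^ (n + 1) :=
      calc (GenContFract.of ξ).dens n ^ n ≤ (GenContFract.of ξ).dens (n + 1) ^ n :=
            pow_le_pow_left₀ (hQpos n).le (hmono (Nat.le_succ n)) n
        _ ≤ (GenContFract.of ξ).dens (n + 1) ^ (n + 1) :=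
            pow_le_pow_right₀ (hQ1 (n + 1)) (Nat.le_succ n)
    have hpn : (0 : ℝ) < (GenContFract.of ξ).dens n ^ n := pow_pos (hQpos n) n
    have hpn1 : (0 : ℝ) < (GenContFract.of ξ).dens (n + 1) ^ (n + 1) := pow_pos (hQpos (n + 1)) _
    have h2 : 1 / ((GenContFract.of ξ).dens n * (GenContFract.of ξ).dens (n + 1)) <
        2 / (GenContFract.of ξ).dens n ^ n := by
      have : 1 / (GenContFract.of ξ).dens (n + 1) ^ (n + 1) ≤
          1 / (GenContFract.of ξ).dens n ^ n := one_div_le_one_div_of_le hpn hpow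
      calc 1 / ((GenContFract.of ξ).dens n * (GenContFract.of ξ).dens (n + 1))
          ≤ |ξ - (GenContFract.of ξ).convs n| + |ξ - (GenContFract.of ξ).convs (n + 1)| := tri
        _ < 1 / (GenContFract.of ξ).dens n ^ n + 1 / (GenContFract.of ξ).dens (n + 1) ^ (n + 1) :=
            add_lt_add t1 t2
        _ ≤ 2 / (GenContFract.of ξ).dens n ^ n := by
            have h2a : 2 / (GenContFract.of ξ).dens n ^ n =
                1 / (GenContFract.of ξ).dens n ^ n + 1 / (GenContFract.of ξ).dens n ^ n := by
              ring
            linarith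
    rw [div_lt_div_iff₀ (mul_pos (hQpos n) (hQpos (n + 1))) hpn] at h2
    linarith
  -- logarithmic version : (n-1) log qₙ < log qₙ₊₁ + 1
  have hlog : ∀ n : ℕ, 1 ≤ n → ((n : ℝ) - 1) * Real.log ((GenContFract.of ξ).dens n) <
      Real.log ((GenContFract.of ξ).dens (n + 1)) + 1 := by
    intro n hn
    have hB : (GenContFract.of ξ).dens n ^ (n - 1) < 2 * (GenContFract.of ξ).dens (n + 1) := by
      have := hA n hn
      have e : (GenContFract.of ξ).dens n ^ n =
          (GenContFract.of ξ).dens n ^ (n - 1) * (GenContFract.of ξ).dens n := by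
        rw [← pow_succ]
        congr 1
        omega
      rw [e] at this
      have hq := hQpos n
      nlinarith [hQpos (n + 1)]
    have hll := Real.log_lt_log (pow_pos (hQpos n) (n - 1)) hB
    rw [Real.log_pow, Real.log_mul two_ne_zero (hQpos (n + 1)).ne'] at hll
    have hc : ((n - 1 : ℕ) : ℝ) = (n : ℝ) - 1 := by
      push_cast [Nat.cast_sub hn]
      ring
    rw [hc] at hll
    have hl2 : Real.log 2 < 1 := by
      have := Real.log_two_lt_d9
      linarith
    linarith
  -- log q₅ ≥ 2
  have hlog5 : ∀ n, 5 ≤ n → (2 : ℝ) ≤ Real.log ((GenContFract.of ξ).dens n) := by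
    intro n hn
    have h8 : (8 : ℝ) ≤ (GenContFract.of ξ).dens n := by
      calc (8 : ℝ) = (Nat.fib 6 : ℝ) := by norm_num
        _ ≤ (GenContFract.of ξ).dens 5 := hfib 5
        _ ≤ (GenContFract.of ξ).dens n := hmono hn
    have he : Real.exp 2 ≤ 8 := by
      rw [show (2 : ℝ) = 1 + 1 by norm_num, Real.exp_add]
      nlinarith [Real.exp_one_lt_d9, Real.exp_pos 1]
    rw [Real.le_log_iff_exp_le (by linarith)]
    linarith
  -- main induction : (m-2)!/6 ≤ log qₘ - 1 for m ≥ 5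
  have hM : ∀ m, 5 ≤ m → (Nat.factorial (m - 2) : ℝ) / 6 ≤
      Real.log ((GenContFract.of ξ).dens m) - 1 := by
    intro m hm
    induction m, hm using Nat.le_induction with
    | base =>
      norm_num [Nat.factorial]
      linarith [hlog5 5 le_rfl]
    | succ m hm ih =>
      have h1 := hlog m (by omega)
      have h2 := hlog5 m hm
      have hc : (Nat.factorial (m + 1 - 2) : ℝ) = ((m : ℝ) - 1) * (Nat.factorial (m - 2) : ℝ) := by
        have e : m + 1 - 2 = (m - 2) + 1 := by omega
        rw [e, Nat.factorial_succ]
        push_cast [Nat.cast_sub (show 2 ≤ m by omega)]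
        ring
      rw [hc]
      have hm4 : (4 : ℝ) ≤ (m : ℝ) - 1 := by
        have : (5 : ℝ) ≤ (m : ℝ) := by exact_mod_cast hm
        linarith
      nlinarith [(Nat.cast_nonneg (Nat.factorial (m - 2)) : (0:ℝ) ≤ (Nat.factorial (m - 2) : ℝ))]
  refine ⟨14, fun m hm => ?_⟩
  have key : (Nat.factorial (m - 3) : ℝ) < Real.log ((GenContFract.of ξ).dens m) := by
    have h1 := hM m (by omega)
    have hc : (Nat.factorial (m - 2) : ℝ) = ((m : ℝ) - 2) * (Nat.factorial (m - 3) : ℝ) := by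
      have e : m - 2 = (m - 3) + 1 := by omega
      rw [e, Nat.factorial_succ]
      push_cast [Nat.cast_sub (show 3 ≤ m by omega)]
      ring
    rw [hc] at h1
    have hm12 : (12 : ℝ) ≤ (m : ℝ) - 2 := by
      have : (14 : ℝ) ≤ (m : ℝ) := by exact_mod_cast hm
      linarith
    have hf1 : (1 : ℝ) ≤ (Nat.factorial (m - 3) : ℝ) := by
      exact_mod_cast Nat.one_le_iff_ne_zero.mpr (Nat.factorial_ne_zero (m - 3))
    nlinarith [hf1]
  calc Real.exp (Nat.factorial (m - 3)) < Real.exp (Real.log ((GenContFract.of ξ).dens m)) :=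
        Real.exp_lt_exp.mpr key
    _ = (GenContFract.of ξ).dens m := Real.exp_log (hQpos m)
end

section
/- Let F(z) = ∑_{k≥1} α_k z^k / 10^{k!} with α_k ∈ {0,1} and α_k = 1 for infinitely many k. Then F is a transcendental function, i.e., there is no nonzero polynomial P(X,Y) with complex coefficients such that P(z, F(z)) = 0 for all z ∈ ℂ. -/
open Polynomial Filter Finset Topology
open Polynomial Filter Finset

private lemma summable_aux (α : ℕ → ℕ) (hα01 : ∀ k, α k = 0 ∨ α k = 1) (z : ℂ) :
    Summable (fun k : ℕ => (α (k + 1) : ℂ) * z ^ (k + 1) / 10 ^ Nat.factorial (k + 1)) := by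
  obtain ⟨M, hM⟩ := pow_unbounded_of_one_lt (2 * (‖z‖ + 1)) (by norm_num : (1:ℝ) < 10)
  apply Summable.of_norm_bounded_eventually_nat (g := fun k => (1/2 : ℝ) ^ k)
  · exact summable_geometric_of_lt_one (by norm_num) (by norm_num)
  · filter_upwards [eventually_ge_atTop M] with k hk
    have hα : (‖(α (k+1) : ℂ)‖ : ℝ) ≤ 1 := by
      rcases hα01 (k+1) with h | h <;> simp [h]
    have h1 : ‖(α (k + 1) : ℂ) * z ^ (k + 1) / 10 ^ Nat.factorial (k + 1)‖
        = ‖(α (k+1) : ℂ)‖ * ‖z‖ ^ (k+1) / 10 ^ Nat.factorial (k+1) := by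
      simp [norm_div, norm_mul, norm_pow]
    rw [h1]
    have hzn : ‖z‖ ^ (k+1) ≤ (‖z‖ + 1) ^ (k+1) :=
      pow_le_pow_left₀ (norm_nonneg z) (by linarith) _
    have hfac : M * (k+1) ≤ Nat.factorial (k+1) := by
      have h2 : M ≤ Nat.factorial k := le_trans hk (Nat.self_le_factorial k)
      calc M * (k+1) ≤ Nat.factorial k * (k+1) := Nat.mul_le_mul_right _ h2
        _ = Nat.factorial (k+1) := by rw [Nat.factorial_succ]; ring
    have hden : ((2 * (‖z‖ + 1)) ^ (k+1) : ℝ) ≤ 10 ^ Nat.factorial (k+1) := by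
      calc ((2 * (‖z‖ + 1)) ^ (k+1) : ℝ) ≤ ((10:ℝ) ^ M) ^ (k+1) :=
            pow_le_pow_left₀ (by positivity) hM.le _
        _ = (10:ℝ) ^ (M * (k+1)) := by rw [← pow_mul]
        _ ≤ 10 ^ Nat.factorial (k+1) := pow_le_pow_right₀ (by norm_num) hfac
    have hpos : (0:ℝ) < 10 ^ Nat.factorial (k+1) := by positivity
    have key : ‖(α (k+1) : ℂ)‖ * ‖z‖ ^ (k+1) / 10 ^ Nat.factorial (k+1)
        ≤ (‖z‖ + 1) ^ (k+1) / (2 * (‖z‖ + 1)) ^ (k+1) := by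
      apply div_le_div₀ (by positivity) _ (by positivity) hden
      calc ‖(α (k+1) : ℂ)‖ * ‖z‖ ^ (k+1) ≤ 1 * (‖z‖+1) ^ (k+1) :=
            mul_le_mul hα hzn (by positivity) one_pos.le
        _ = (‖z‖+1)^(k+1) := one_mul _
    refine key.trans ?_
    have h3 : ((‖z‖ + 1) ^ (k+1) : ℝ) / (2 * (‖z‖ + 1)) ^ (k+1) = (1/2)^(k+1) := by
      rw [mul_pow, div_pow]
      field_simp
      ring
    rw [h3]
    exact pow_le_pow_of_le_one (by norm_num) (by norm_num) (Nat.le_succ k)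

private lemma lower_aux (α : ℕ → ℕ) (hα01 : ∀ k, α k = 0 ∨ α k = 1)
    (hinf : {k : ℕ | α k = 1}.Infinite)
    (F : ℂ → ℂ)
    (hF : ∀ z, F z = ∑' k : ℕ, (α (k + 1) : ℂ) * z ^ (k + 1) / 10 ^ Nat.factorial (k + 1))
    (hs : ∀ z : ℂ, Summable (fun k : ℕ => (α (k + 1) : ℂ) * z ^ (k + 1) / 10 ^ Nat.factorial (k + 1)))
    (d : ℕ) (C : ℝ) :
    ∀ᶠ x : ℝ in atTop, C * x ^ d < ‖F (x : ℂ)‖ := by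
  obtain ⟨k, hk1, hkd⟩ := hinf.exists_gt d
  filter_upwards [eventually_ge_atTop (1 : ℝ),
    eventually_ge_atTop (C * 10 ^ Nat.factorial k + 1)] with x hx1 hx2
  -- real-terms version
  set g : ℕ → ℝ := fun j => (α (j + 1) : ℝ) * x ^ (j + 1) / 10 ^ Nat.factorial (j + 1) with hg
  have hcast : ∀ j : ℕ, ((g j : ℝ) : ℂ) = (α (j + 1) : ℂ) * (x:ℂ) ^ (j + 1) / 10 ^ Nat.factorial (j + 1) := by
    intro j; push_cast [hg]; ring
  have hsg : Summable g := by
    have h := (hs (x:ℂ)).map (Complex.reCLM : ℂ →L[ℝ] ℝ) Complex.reCLM.continuous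
    convert h using 1
    funext j
    simp only [Function.comp_apply, ← hcast j, Complex.reCLM_apply, Complex.ofReal_re]
  have hre : (F (x:ℂ)).re = ∑' j, g j := by
    rw [hF, Complex.re_tsum (hs (x:ℂ))]
    congr 1
    funext j
    rw [← hcast j]
    simp
  have hgnonneg : ∀ j, 0 ≤ g j := by
    intro j
    have : (0:ℝ) ≤ x := le_trans zero_le_one hx1
    positivity
  obtain ⟨j, hj⟩ : ∃ j, j + 1 = k := ⟨k - 1, by omega⟩
  have hterm : x ^ k / 10 ^ Nat.factorial k ≤ ∑' j, g j := by
    have := Summable.le_tsum hsg j (fun i _ => hgnonneg i)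
    rw [hg] at this
    simp only [hj] at this
    rwa [(by simp [Set.mem_setOf_eq] at hk1; exact_mod_cast congrArg Nat.cast hk1 : ((α k : ℝ)) = 1), one_mul] at this
  have hnorm : ∑' j, g j ≤ ‖F (x:ℂ)‖ := by
    rw [← hre]
    calc (F (x:ℂ)).re ≤ |(F (x:ℂ)).re| := le_abs_self _
      _ ≤ ‖F (x:ℂ)‖ := Complex.abs_re_le_norm _
      _ = ‖F (x:ℂ)‖ := rfl
  have hlow : C * x ^ d < x ^ k / 10 ^ Nat.factorial k := by
    have hxpos : (0:ℝ) < x := lt_of_lt_of_le one_pos hx1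
    have hpow : x ^ (k - d) ≥ x := le_self_pow₀ hx1 (by omega)
    have h10 : (0:ℝ) < 10 ^ Nat.factorial k := by positivity
    have hkd' : x ^ k = x ^ d * x ^ (k - d) := by rw [← pow_add]; congr 1; omega
    rw [hkd', div_eq_mul_inv]
    have h1 : C * 10 ^ Nat.factorial k < x ^ (k - d) := by
      calc C * 10 ^ Nat.factorial k < C * 10 ^ Nat.factorial k + 1 := by linarith
        _ ≤ x := hx2
        _ ≤ x ^ (k - d) := hpow
    calc C * x ^ d = (C * 10 ^ Nat.factorial k) * x ^ d * (10 ^ Nat.factorial k)⁻¹ := by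
          field_simp
      _ < x ^ (k - d) * x ^ d * (10 ^ Nat.factorial k)⁻¹ := by
          apply mul_lt_mul_of_pos_right (mul_lt_mul_of_pos_right h1 (by positivity)) (by positivity)
      _ = x ^ d * x ^ (k - d) * (10 ^ Nat.factorial k)⁻¹ := by ring
  linarith

private lemma root_bound {n : ℕ} (hn : 1 ≤ n) (a : ℕ → ℂ) (y : ℂ)
    (h : ∑ j ∈ Finset.range (n + 1), a j * y ^ j = 0) (han : a n ≠ 0) :
    ‖y‖ ≤ max 1 ((∑ j ∈ Finset.range n, ‖a j‖) / ‖a n‖) := by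
  by_cases hy : ‖y‖ ≤ 1
  · exact hy.trans (le_max_left _ _)
  push_neg at hy
  refine le_max_of_le_right ?_
  have hanpos : 0 < ‖a n‖ := norm_pos_iff.mpr han
  have hypow : (0:ℝ) < ‖y‖ ^ (n - 1) := by positivity
  rw [le_div_iff₀ hanpos]
  have hsplit : a n * y ^ n = -∑ j ∈ Finset.range n, a j * y ^ j := by
    have := h
    rw [Finset.sum_range_succ] at this
    linear_combination this
  have h1 : ‖a n‖ * ‖y‖ ^ n ≤ ∑ j ∈ Finset.range n, ‖a j‖ * ‖y‖ ^ j := by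
    calc ‖a n‖ * ‖y‖ ^ n = ‖a n * y ^ n‖ := by rw [norm_mul, norm_pow]
      _ = ‖∑ j ∈ Finset.range n, a j * y ^ j‖ := by rw [hsplit, norm_neg]
      _ ≤ ∑ j ∈ Finset.range n, ‖a j * y ^ j‖ := norm_sum_le _ _
      _ = ∑ j ∈ Finset.range n, ‖a j‖ * ‖y‖ ^ j := by
          simp [norm_mul, norm_pow]
  have h2 : ∑ j ∈ Finset.range n, ‖a j‖ * ‖y‖ ^ j
      ≤ (∑ j ∈ Finset.range n, ‖a j‖) * ‖y‖ ^ (n - 1) := by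
    rw [Finset.sum_mul]
    apply Finset.sum_le_sum
    intro j hj
    have hjn : j ≤ n - 1 := by simp at hj; omega
    exact mul_le_mul_of_nonneg_left (pow_le_pow_right₀ hy.le hjn) (norm_nonneg _)
  have h3 : ‖y‖ ^ n = ‖y‖ ^ (n - 1) * ‖y‖ := by
    rw [← pow_succ]; congr 1; omega
  rw [h3] at h1
  have := h1.trans h2
  nlinarith [norm_nonneg (a n), hy, hypow]

private lemma poly_growth (p : ℂ[X]) :
    ∃ C : ℝ, 0 ≤ C ∧ ∀ z : ℂ, 1 ≤ ‖z‖ → ‖p.eval z‖ ≤ C * ‖z‖ ^ p.natDegree := by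
  refine ⟨∑ i ∈ Finset.range (p.natDegree + 1), ‖p.coeff i‖,
    Finset.sum_nonneg fun _ _ => norm_nonneg _, fun z hz => ?_⟩
  rw [eval_eq_sum_range]
  calc ‖∑ i ∈ Finset.range (p.natDegree + 1), p.coeff i * z ^ i‖
      ≤ ∑ i ∈ Finset.range (p.natDegree + 1), ‖p.coeff i * z ^ i‖ := norm_sum_le _ _
    _ ≤ ∑ i ∈ Finset.range (p.natDegree + 1), ‖p.coeff i‖ * ‖z‖ ^ p.natDegree := by
        apply Finset.sum_le_sum
        intro i hi
        rw [norm_mul, norm_pow]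
        exact mul_le_mul_of_nonneg_left (pow_le_pow_right₀ hz (by simp at hi; omega)) (norm_nonneg _)
    _ = (∑ i ∈ Finset.range (p.natDegree + 1), ‖p.coeff i‖) * ‖z‖ ^ p.natDegree := by
        rw [Finset.sum_mul]

private noncomputable def Phi : MvPolynomial (Fin 1) ℂ →+* Polynomial ℂ :=
  (Polynomial.mapRingHom (MvPolynomial.eval (![] : Fin 0 → ℂ))).comp
    (MvPolynomial.finSuccEquiv ℂ 0).toRingEquiv.toRingHom

private lemma eval0_inj : Function.Injective (MvPolynomial.eval (![] : Fin 0 → ℂ)) := by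
  intro p q h
  obtain ⟨a, rfl⟩ := MvPolynomial.C_surjective (Fin 0) p
  obtain ⟨b, rfl⟩ := MvPolynomial.C_surjective (Fin 0) q
  simp only [MvPolynomial.eval_C] at h
  rw [h]

private lemma Phi_inj : Function.Injective Phi := by
  have h1 : Function.Injective (Polynomial.map (MvPolynomial.eval (![] : Fin 0 → ℂ))) :=
    Polynomial.map_injective _ eval0_inj
  intro p q h
  exact (MvPolynomial.finSuccEquiv ℂ 0).injective (h1 h)

private lemma Phi_eval (q : MvPolynomial (Fin 1) ℂ) (z : ℂ) :
    Polynomial.eval z (Phi q) = MvPolynomial.eval ![z] q := by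
  have h := MvPolynomial.eval_eq_eval_mv_eval' (![] : Fin 0 → ℂ) z q
  have h2 : (![z] : Fin 1 → ℂ) = Fin.cons z ![] := by
    funext i; fin_cases i; rfl
  rw [h2, h]
  rfl

private lemma reduction_aux (P : MvPolynomial (Fin 2) ℂ) (F : ℂ → ℂ)
    (hP : ∀ z : ℂ, MvPolynomial.eval ![z, F z] P = 0) (hP0 : P ≠ 0) :
    ∃ QQ : Polynomial (Polynomial ℂ), QQ ≠ 0 ∧
      ∀ z : ℂ, ∑ j ∈ Finset.range (QQ.natDegree + 1), (QQ.coeff j).eval z * (F z) ^ j = 0 := by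
  set P' := MvPolynomial.rename (Equiv.swap (0 : Fin 2) 1) P with hP'
  have hP'0 : P' ≠ 0 := by
    intro h
    exact hP0 (MvPolynomial.rename_injective _ (Equiv.swap 0 1).injective (by simpa using h))
  set Q := MvPolynomial.finSuccEquiv ℂ 1 P' with hQdef
  have hQ0 : Q ≠ 0 := by
    intro h
    exact hP'0 (EmbeddingLike.map_eq_zero_iff.mp h)
  refine ⟨Q.map Phi, ?_, ?_⟩
  · intro h
    apply hQ0
    apply Polynomial.map_injective Phi Phi_inj
    rw [Polynomial.map_zero]
    exact h
  · intro z
    have key : MvPolynomial.eval ![F z, z] P' = 0 := by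
      rw [hP', MvPolynomial.eval_rename]
      have : ((![F z, z] : Fin 2 → ℂ) ∘ (Equiv.swap (0:Fin 2) 1)) = ![z, F z] := by
        funext i
        fin_cases i <;> simp [Equiv.swap_apply_left, Equiv.swap_apply_right]
      rw [this]
      exact hP z
    have hcons : (![F z, z] : Fin 2 → ℂ) = Fin.cons (F z) ![z] := by
      funext i; fin_cases i <;> rfl
    rw [hcons, MvPolynomial.eval_eq_eval_mv_eval'] at key
    have hmap : Q.map (MvPolynomial.eval ![z]) = (Q.map Phi).map (Polynomial.evalRingHom z) := by
      rw [Polynomial.map_map]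
      congr 1
      exact RingHom.ext fun q => (Phi_eval q z).symm
    rw [← hQdef, hmap] at key
    have hlt : ((Q.map Phi).map (Polynomial.evalRingHom z)).natDegree < (Q.map Phi).natDegree + 1 :=
      Nat.lt_succ_of_le natDegree_map_le
    rw [eval_eq_sum_range' hlt] at key
    simp only [Polynomial.coeff_map, Polynomial.coe_evalRingHom] at key ⊢
    exact key

/-- If `F(z) = ∑_{k ≥ 1} α_k z^k / 10^{k!}` with `α_k ∈ {0,1}` and `α_k = 1` for infinitely
many `k`, then `F` is a transcendental function: no nonzero complex polynomial `P(X, Y)`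
satisfies `P(z, F(z)) = 0` for all `z ∈ ℂ`. -/
theorem stmt_10 (α : ℕ → ℕ) (hα01 : ∀ k, α k = 0 ∨ α k = 1)
    (hinf : {k : ℕ | α k = 1}.Infinite)
    (F : ℂ → ℂ)
    (hF : ∀ z, F z = ∑' k : ℕ, (α (k + 1) : ℂ) * z ^ (k + 1) / 10 ^ Nat.factorial (k + 1)) :
    ∀ P : MvPolynomial (Fin 2) ℂ, (∀ z : ℂ, MvPolynomial.eval ![z, F z] P = 0) → P = 0 := by
  intro P hP
  by_contra hP0
  have hs : ∀ z : ℂ, Summable (fun k : ℕ => (α (k + 1) : ℂ) * z ^ (k + 1) / 10 ^ Nat.factorial (k + 1)) :=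
    fun z => summable_aux α hα01 z
  obtain ⟨QQ, hQQ0, hrel⟩ := reduction_aux P F hP hP0
  set n := QQ.natDegree with hn
  rcases Nat.eq_zero_or_pos n with hn0 | hn1
  · -- degree zero in Y: QQ is a nonzero constant, but its value vanishes everywhere
    have hc : QQ.coeff 0 = 0 := by
      apply Polynomial.funext
      intro r
      have := hrel r
      rw [hn0] at this
      simpa using this
    apply hQQ0
    rw [Polynomial.eq_C_of_natDegree_eq_zero (hn ▸ hn0 : QQ.natDegree = 0), hc, map_zero]
  · -- main case : n ≥ 1, polynomial growth bound contradicts lower_aux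
    have hlead : QQ.coeff n ≠ 0 := Polynomial.leadingCoeff_ne_zero.mpr hQQ0
    obtain ⟨ε, hε0, hεev⟩ : ∃ ε : ℝ, 0 < ε ∧ ∀ᶠ x : ℝ in atTop, ε ≤ ‖(QQ.coeff n).eval (x:ℂ)‖ := by
      by_cases hdeg : 0 < (QQ.coeff n).degree
      · have hz : Tendsto (fun x : ℝ => ‖((x:ℝ) : ℂ)‖) atTop atTop := by
          simp only [Complex.norm_real, Real.norm_eq_abs]
          exact tendsto_abs_atTop_atTop
        exact ⟨1, one_pos, ((QQ.coeff n).tendsto_norm_atTop hdeg hz).eventually_ge_atTop 1⟩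
      · push_neg at hdeg
        have hCc : QQ.coeff n = Polynomial.C ((QQ.coeff n).coeff 0) :=
          Polynomial.eq_C_of_degree_le_zero hdeg
        have hc0 : (QQ.coeff n).coeff 0 ≠ 0 := by
          intro h; apply hlead; rw [hCc, h, map_zero]
        refine ⟨‖(QQ.coeff n).coeff 0‖, norm_pos_iff.mpr hc0, Eventually.of_forall fun x => ?_⟩
        rw [hCc]
        simp
    choose Cf hCf0 hCf using fun j : ℕ => poly_growth (QQ.coeff j)
    set D := (Finset.range (n+1)).sup (fun j => (QQ.coeff j).natDegree) with hD
    set S := ∑ j ∈ Finset.range n, Cf j with hS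
    have hS0 : 0 ≤ S := Finset.sum_nonneg fun j _ => hCf0 j
    set Cbig := 1 + S / ε with hCbig
    have hCbig1 : 1 ≤ Cbig := by
      have : 0 ≤ S / ε := div_nonneg hS0 hε0.le
      simp [hCbig]; linarith
    have hlow := lower_aux α hα01 hinf F hF hs D Cbig
    rw [eventually_atTop] at hlow hεev
    obtain ⟨x₁, hx₁⟩ := hlow
    obtain ⟨x₂, hx₂⟩ := hεev
    set x := max 1 (max x₁ x₂) with hx
    have hx1 : (1:ℝ) ≤ x := le_max_left _ _
    have hxlow := hx₁ x ((le_max_left x₁ x₂).trans (le_max_right _ _))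
    have hxε := hx₂ x ((le_max_right x₁ x₂).trans (le_max_right _ _))
    have hxnorm : ‖((x:ℝ) : ℂ)‖ = x := by
      rw [Complex.norm_real, Real.norm_eq_abs, abs_of_nonneg (by linarith)]
    have hxpowD : (1:ℝ) ≤ x ^ D := one_le_pow₀ hx1
    -- a_j := coefficients evaluated at x
    have han : (QQ.coeff n).eval ((x:ℝ):ℂ) ≠ 0 := by
      intro h; rw [h, norm_zero] at hxε; linarith
    have hrb := root_bound hn1 (fun j => (QQ.coeff j).eval ((x:ℝ):ℂ)) (F ((x:ℝ):ℂ))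
      (hrel ((x:ℝ):ℂ)) han
    have hsum : (∑ j ∈ Finset.range n, ‖(QQ.coeff j).eval ((x:ℝ):ℂ)‖) ≤ S * x ^ D := by
      rw [hS, Finset.sum_mul]
      apply Finset.sum_le_sum
      intro j hj
      have hjD : (QQ.coeff j).natDegree ≤ D := by
        rw [hD]
        exact Finset.le_sup (f := fun j => (QQ.coeff j).natDegree) (Finset.mem_range.mpr (Nat.lt_succ_of_lt (Finset.mem_range.mp hj)))
      calc ‖(QQ.coeff j).eval ((x:ℝ):ℂ)‖
          ≤ Cf j * ‖((x:ℝ):ℂ)‖ ^ (QQ.coeff j).natDegree := hCf j _ (by rw [hxnorm]; exact hx1)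
        _ = Cf j * x ^ (QQ.coeff j).natDegree := by rw [hxnorm]
        _ ≤ Cf j * x ^ D := mul_le_mul_of_nonneg_left
            (pow_le_pow_right₀ hx1 hjD) (hCf0 j)
    have hub : ‖F ((x:ℝ):ℂ)‖ ≤ Cbig * x ^ D := by
      refine hrb.trans (max_le ?_ ?_)
      · calc (1:ℝ) ≤ x ^ D := hxpowD
          _ = 1 * x ^ D := (one_mul _).symm
          _ ≤ Cbig * x ^ D := mul_le_mul_of_nonneg_right hCbig1 (by positivity)
      · calc (∑ j ∈ Finset.range n, ‖(QQ.coeff j).eval ((x:ℝ):ℂ)‖) / ‖(QQ.coeff n).eval ((x:ℝ):ℂ)‖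
            ≤ (S * x ^ D) / ε := by
              apply div_le_div₀ (by positivity) hsum hε0 hxε
          _ = (S / ε) * x ^ D := by ring
          _ ≤ Cbig * x ^ D := mul_le_mul_of_nonneg_right (by rw [hCbig]; linarith) (by positivity)
    linarith
end

section
/- Let ξ be a real number, N a positive integer with 10^N > |ξ|, and F(z) = ∑_{k≥1} α_k z^k / 10^{k!} with α_k ∈ {0,1} and α_k = 0 for N < k < M (where M > N). Then |F(ξ) - F_N(ξ)| ≤ 2 / 10^{M! - M·N}, where F_N(z) = ∑_{k=1}^N α_k z^k / 10^{k!}. -/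
set_option maxHeartbeats 1000000

/-- For a real `ξ`, a positive integer `N` with `10^N > |ξ|`, and
`F(z) = ∑_{k ≥ 1} α_k z^k / 10^{k!}` with `α_k ∈ {0,1}` and `α_k = 0` for `N < k < M`
(`M > N`), the truncation `F_N` satisfies `|F(ξ) - F_N(ξ)| ≤ 2 / 10^{M! - M·N}`. -/
theorem stmt_11 (ξ : ℝ) (N M : ℕ) (hN : 1 ≤ N) (hM : N < M)
    (hξ : |ξ| < 10 ^ N)
    (α : ℕ → ℕ) (hα01 : ∀ k, α k = 0 ∨ α k = 1)
    (hgap : ∀ k, N < k → k < M → α k = 0) :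
    |(∑' k : ℕ, (α (k + 1) : ℝ) * ξ ^ (k + 1) / 10 ^ Nat.factorial (k + 1)) -
        ∑ k ∈ Finset.Icc 1 N, (α k : ℝ) * ξ ^ k / 10 ^ Nat.factorial k| ≤
      2 / 10 ^ (Nat.factorial M - M * N) := by
  set f : ℕ → ℝ := fun k => (α (k + 1) : ℝ) * ξ ^ (k + 1) / 10 ^ Nat.factorial (k + 1) with hf
  set C : ℝ := (1/10 : ℝ) ^ (Nat.factorial M - M * N) with hCdef
  -- nat facts
  have hMN : M * N ≤ M.factorial := by
    calc M * N ≤ M * (M - 1).factorial :=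
          Nat.mul_le_mul_left _ (le_trans (by omega) (Nat.self_le_factorial _))
      _ = M.factorial := Nat.mul_factorial_pred (by omega)
  obtain ⟨c, hc⟩ := Nat.exists_eq_add_of_le hMN
  have hcsub : M.factorial - M * N = c := by rw [hc, Nat.add_sub_cancel_left]
  have hpow : ∀ i : ℕ, 1 + M * i ≤ (M + 1) ^ i := by
    intro i
    induction i with
    | zero => simp
    | succ n ih =>
        calc 1 + M * (n + 1) ≤ (1 + M * n) * (M + 1) := by nlinarith [Nat.zero_le (M * n * M)]
          _ ≤ (M + 1) ^ n * (M + 1) := Nat.mul_le_mul_right _ ih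
          _ = (M + 1) ^ (n + 1) := (pow_succ _ _).symm
  have hnat : ∀ i : ℕ, N * (i + M) + ((M.factorial - M * N) + i) ≤ (i + M).factorial := by
    intro i
    rw [hcsub, Nat.add_comm i M]
    have h1 := Nat.factorial_mul_pow_le_factorial (m := M) (n := i)
    have h2 := hpow i
    have h3 : M ≤ M.factorial := Nat.self_le_factorial M
    have h4 : (N + 1) * i ≤ M.factorial * M * i := by
      refine Nat.mul_le_mul_right i ?_
      calc N + 1 ≤ M := by omega
        _ ≤ M.factorial * M := Nat.le_mul_of_pos_left M (Nat.factorial_pos M)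
    nlinarith [Nat.mul_le_mul_left M.factorial h2, h1, hc, h4]
  -- per-term bound
  have hC : ∀ i : ℕ, |f (i + (M - 1))| ≤ C * (1/10) ^ i := by
    intro i
    have hk : i + (M - 1) + 1 = i + M := by omega
    rw [hf]
    dsimp only
    rw [hk]
    have hden : (0:ℝ) < 10 ^ (i + M).factorial := by positivity
    have hα : (α (i + M) : ℝ) ≤ 1 := by rcases hα01 (i + M) with h | h <;> simp [h]
    have h1 : |ξ| ^ (i + M) ≤ (10:ℝ) ^ (N * (i + M)) := by
      rw [pow_mul]
      exact pow_le_pow_left₀ (abs_nonneg ξ) hξ.le _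
    have h2 : (10:ℝ) ^ (N * (i + M)) / 10 ^ (i + M).factorial
        ≤ (1/10 : ℝ) ^ ((M.factorial - M * N) + i) := by
      rw [div_le_iff₀ hden, one_div, inv_pow, inv_mul_eq_div, le_div_iff₀ (by positivity),
        ← pow_add]
      exact pow_le_pow_right₀ (by norm_num) (hnat i)
    calc |(α (i + M) : ℝ) * ξ ^ (i + M) / 10 ^ (i + M).factorial|
        = (α (i + M) : ℝ) * |ξ| ^ (i + M) / 10 ^ (i + M).factorial := by
          rw [abs_div, abs_mul, abs_pow, abs_of_nonneg (Nat.cast_nonneg _),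
            abs_of_pos hden]
      _ ≤ 1 * (10:ℝ) ^ (N * (i + M)) / 10 ^ (i + M).factorial := by
          gcongr
      _ = (10:ℝ) ^ (N * (i + M)) / 10 ^ (i + M).factorial := by rw [one_mul]
      _ ≤ (1/10 : ℝ) ^ ((M.factorial - M * N) + i) := h2
      _ = C * (1/10) ^ i := by rw [hCdef, pow_add]
  -- summability
  have hgeo : Summable (fun i : ℕ => C * (1/10 : ℝ) ^ i) :=
    (summable_geometric_of_lt_one (by norm_num) (by norm_num)).mul_left _
  have hshift : Summable (fun i : ℕ => f (i + (M - 1))) :=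
    Summable.of_norm_bounded hgeo (fun i => by rw [Real.norm_eq_abs]; exact hC i)
  have hsum : Summable f := (summable_nat_add_iff (M - 1)).mp hshift
  -- finite part equals truncation
  have hfin : ∑ i ∈ Finset.range (M - 1), f i
      = ∑ k ∈ Finset.Icc 1 N, (α k : ℝ) * ξ ^ k / 10 ^ k.factorial := by
    have e1 : ∑ k ∈ Finset.Ico 1 M, (α k : ℝ) * ξ ^ k / 10 ^ k.factorial
        = ∑ i ∈ Finset.range (M - 1), f i := by
      rw [Finset.sum_Ico_eq_sum_range]
      refine Finset.sum_congr rfl fun i _ => ?_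
      rw [hf]; dsimp only; rw [Nat.add_comm 1 i]
    rw [← e1, ← Finset.sum_Ico_consecutive _ (by omega : 1 ≤ N + 1) (by omega : N + 1 ≤ M),
      Finset.Ico_add_one_right_eq_Icc]
    have h0 : ∑ k ∈ Finset.Ico (N + 1) M, (α k : ℝ) * ξ ^ k / 10 ^ k.factorial = 0 := by
      refine Finset.sum_eq_zero fun k hk => ?_
      rw [Finset.mem_Ico] at hk
      rw [hgap k (by omega) hk.2]
      simp
    rw [h0, add_zero]
  -- decompose
  have hdec := hsum.sum_add_tsum_nat_add (M - 1)
  rw [← hdec, hfin, add_sub_cancel_left]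
  -- bound the tail
  have habs : |∑' i : ℕ, f (i + (M - 1))| ≤ C * (1 - 1/10 : ℝ)⁻¹ := by
    calc |∑' i : ℕ, f (i + (M - 1))| ≤ ∑' i : ℕ, |f (i + (M - 1))| := by
          have h := norm_tsum_le_tsum_norm (f := fun i : ℕ => f (i + (M - 1)))
            (by simpa [Real.norm_eq_abs] using hshift.abs)
          simpa [Real.norm_eq_abs] using h
      _ ≤ ∑' i : ℕ, C * (1/10 : ℝ) ^ i := Summable.tsum_le_tsum hC hshift.abs hgeo
      _ = C * ∑' i : ℕ, (1/10 : ℝ) ^ i := tsum_mul_left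
      _ = C * (1 - 1/10 : ℝ)⁻¹ := by
          rw [tsum_geometric_of_lt_one (by norm_num) (by norm_num)]
  refine habs.trans ?_
  have hCpos : (0:ℝ) < C := by rw [hCdef]; positivity
  have : C * (1 - 1/10 : ℝ)⁻¹ ≤ 2 * C := by nlinarith
  refine this.trans_eq ?_
  rw [hCdef, one_div, inv_pow, ← div_eq_mul_inv]
end
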